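/- In the Weyl algebra A₁ = ℂ⟨z, ∂⟩/(∂z - z∂ = 1), the right ideal generated by z² and 1 - z∂ is a proper nonzero right ideal that is not principal (not generated by a single element). -/

import Mathlib

set_option synthInstance.maxHeartbeats 1000000
set_option maxHeartbeats 2000000
/-- The first Weyl algebra `A₁ = ℂ⟨z,∂⟩/(∂z - z∂ = 1)`, realized concretely (and
faithfully) as the subalgebra of `End_ℂ(ℂ[x])` generated by multiplication by `x`
and differentiation. -/
noncomputable def WeylAlgebra : Subalgebra ℂ (Module.End ℂ (Polynomial ℂ)) :=
  Algebra.adjoin ℂ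
    {LinearMap.mulLeft ℂ (Polynomial.X : Polynomial ℂ),
     (Polynomial.derivative : Polynomial ℂ →ₗ[ℂ] Polynomial ℂ)}

/-- The generator `z` (multiplication by the variable). -/
noncomputable def Wz : WeylAlgebra :=
  ⟨LinearMap.mulLeft ℂ (Polynomial.X : Polynomial ℂ),
    Algebra.subset_adjoin (Set.mem_insert _ _)⟩

/-- The generator `∂` (differentiation). -/
noncomputable def Wd : WeylAlgebra :=
  ⟨(Polynomial.derivative : Polynomial ℂ →ₗ[ℂ] Polynomial ℂ),
    Algebra.subset_adjoin (Set.mem_insert_of_mem _ rfl)⟩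

open Polynomial Finset

abbrev CP := Polynomial ℂ
abbrev E := Module.End ℂ CP

lemma weyl_commutator : Wd * Wz - Wz * Wd = 1 := by
  apply Subtype.ext
  show (↑(Wd * Wz) - ↑(Wz * Wd) : Module.End ℂ (Polynomial ℂ)) = 1
  apply LinearMap.ext
  intro p
  show Polynomial.derivative (X * p) - X * Polynomial.derivative p = p
  simp [Polynomial.derivative_mul]
def HasData (w : E) (R N : ℕ) (q : ℕ → CP) : Prop :=
  ∀ n : ℕ, (X : CP) ^ R * w ((X : CP) ^ n)
      = ∑ t ∈ Finset.range N, ((q t).eval (n : ℂ)) • (X : CP) ^ (n + t)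

lemma data_z : HasData (LinearMap.mulLeft ℂ (X : CP)) 0 2 (fun t => if t = 1 then 1 else 0) := by
  intro n
  show (X:CP)^0 * (X * X ^ n) = _
  rw [Finset.sum_range_succ, Finset.sum_range_succ, Finset.sum_range_zero]
  simp [pow_succ, mul_comm]

lemma data_d : HasData (Polynomial.derivative : CP →ₗ[ℂ] CP) 1 1 (fun _ => X) := by
  intro n
  show (X:CP)^1 * Polynomial.derivative (X ^ n) = _
  rw [Finset.sum_range_one, Polynomial.derivative_X_pow]
  cases n with
  | zero => simp
  | succ m =>
    rw [smul_eq_C_mul]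
    simp only [Nat.add_sub_cancel, eval_X]
    push_cast
    ring

lemma data_one : HasData 1 0 1 (fun _ => 1) := by
  intro n
  show (X:CP)^0 * (X:CP)^n = _
  simp

lemma data_zero : HasData 0 0 1 (fun _ => 0) := by
  intro n
  show (X:CP)^0 * (0:E) (X^n) = _
  simp
lemma data_raiseN {w R N q} (h : HasData w R N q) {N'} (hN : N ≤ N') :
    HasData w R N' (fun t => if t < N then q t else 0) := by
  intro n
  rw [h n, ← Finset.sum_subset (Finset.range_subset_range.2 hN)]
  · exact Finset.sum_congr rfl fun t ht => by simp [Finset.mem_range.1 ht]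
  · intro t _ ht
    have h' : ¬ t < N := by simpa using ht
    simp [h']

lemma X_mul_derivative_X_pow (k : ℕ) :
    (X:CP) * Polynomial.derivative ((X:CP)^k) = ((k:ℂ)) • (X:CP)^k := by
  rw [Polynomial.derivative_X_pow]
  cases k with
  | zero => simp
  | succ m =>
    rw [smul_eq_C_mul]
    simp only [Nat.succ_sub_one]
    push_cast
    ring

lemma shift_sum (N n : ℕ) (a : ℕ → ℂ) :
    ∑ t ∈ Finset.range N, (X:CP) * (a t • (X:CP)^(n+t))
      = ∑ t ∈ Finset.range (N+1), (if t = 0 then 0 else a (t-1)) • (X:CP)^(n+t) := by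
  rw [Finset.sum_range_succ' (fun t => (if t = 0 then (0:ℂ) else a (t-1)) • (X:CP)^(n+t)) N]
  simp only [Nat.succ_ne_zero, if_neg, if_pos rfl, Nat.succ_sub_one, zero_smul, add_zero,
    reduceIte]
  apply Finset.sum_congr rfl
  intro t _
  rw [mul_smul_comm]
  congr 1
  rw [← pow_succ', Nat.add_assoc]

lemma data_raiseR {w R N q} (h : HasData w R N q) :
    HasData w (R + 1) (N + 1) (fun t => if t = 0 then 0 else q (t - 1)) := by
  intro n
  rw [pow_succ, mul_comm ((X:CP)^R) X, mul_assoc, h n, Finset.mul_sum]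
  have := shift_sum N n (fun t => (q t).eval (n:ℂ))
  simp only [apply_ite (Polynomial.eval (n:ℂ)), eval_zero]
  exact this

lemma data_raiseR' {w R N q} (h : HasData w R N q) (k : ℕ) :
    HasData w (R + k) (N + k) (fun t => if t < k then 0 else q (t - k)) := by
  induction k with
  | zero => simpa using h
  | succ m ih =>
    have h2 := data_raiseR ih
    have hfun : (fun t => if t < m + 1 then (0:CP) else q (t - (m+1)))
        = fun t => if t = 0 then 0 else if t - 1 < m then 0 else q (t - 1 - m) := by
      funext t
      rcases Nat.eq_zero_or_pos t with rfl | htpos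
      · simp
      · obtain ⟨s, rfl⟩ : ∃ s, t = s + 1 := ⟨t - 1, by omega⟩
        simp only [Nat.succ_ne_zero, if_neg, Nat.succ_sub_one, reduceIte]
        by_cases hsm : s < m
        · rw [if_pos (by omega), if_pos hsm]
        · rw [if_neg (by omega), if_neg hsm, Nat.succ_sub_succ]
    rw [hfun]
    exact h2

lemma data_upgrade {w R N q} (h : HasData w R N q) {R' N'} (hR : R ≤ R') (hN : N + (R' - R) ≤ N') :
    ∃ q', HasData w R' N' q' := by
  obtain ⟨k, rfl⟩ := Nat.exists_eq_add_of_le hR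
  refine ⟨_, data_raiseN (data_raiseR' h k) ?_⟩
  omega

lemma data_add {w₁ w₂ : E} {R N q₁ q₂} (h₁ : HasData w₁ R N q₁) (h₂ : HasData w₂ R N q₂) :
    HasData (w₁ + w₂) R N (fun t => q₁ t + q₂ t) := by
  intro n
  show (X:CP)^R * (w₁ (X^n) + w₂ (X^n)) = _
  rw [mul_add, h₁ n, h₂ n, ← Finset.sum_add_distrib]
  exact Finset.sum_congr rfl fun t _ => by simp [add_smul]

lemma data_csmul {w : E} {R N q} (c : ℂ) (h : HasData w R N q) :
    HasData (c • w) R N (fun t => C c * q t) := by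
  intro n
  show (X:CP)^R * (c • (w (X^n))) = _
  rw [mul_smul_comm, h n, Finset.smul_sum]
  exact Finset.sum_congr rfl fun t _ => by simp [smul_smul]

lemma data_lmul_z {w : E} {R N q} (h : HasData w R N q) :
    HasData (LinearMap.mulLeft ℂ (X : CP) * w) R (N + 1) (fun t => if t = 0 then 0 else q (t - 1)) := by
  intro n
  show (X:CP)^R * (X * w (X^n)) = _
  rw [mul_left_comm, h n, Finset.mul_sum]
  have := shift_sum N n (fun t => (q t).eval (n:ℂ))
  simp only [apply_ite (Polynomial.eval (n:ℂ)), eval_zero]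
  exact this

lemma X_mul_derivative (R : ℕ) (p : CP) :
    X * Polynomial.derivative ((X:CP)^R * p)
      = ((R:ℂ)) • ((X:CP)^R * p) + (X:CP)^(R+1) * Polynomial.derivative p := by
  rw [Polynomial.derivative_mul, mul_add]
  congr 1
  · rw [← mul_assoc, X_mul_derivative_X_pow, smul_mul_assoc]
  · rw [← mul_assoc, ← pow_succ']

lemma data_lmul_d {w : E} {R N q} (h : HasData w R N q) :
    HasData ((Polynomial.derivative : CP →ₗ[ℂ] CP) * w) (R + 1) N
      (fun t => q t * (X + C ((t : ℂ) - R))) := by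
  intro n
  show (X:CP)^(R+1) * Polynomial.derivative (w (X^n)) = _
  have key := congrArg (fun p => X * Polynomial.derivative p) (h n)
  rw [X_mul_derivative] at key
  have hd : X * Polynomial.derivative (∑ t ∈ Finset.range N, ((q t).eval (n:ℂ)) • (X:CP)^(n+t))
      = ∑ t ∈ Finset.range N, ((q t).eval (n:ℂ) * ((n:ℂ) + t)) • (X:CP)^(n+t) := by
    rw [Polynomial.derivative_sum, Finset.mul_sum]
    apply Finset.sum_congr rfl
    intro t _
    rw [Polynomial.derivative_smul, mul_smul_comm, X_mul_derivative_X_pow, smul_smul]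
    congr 1
    push_cast
    ring
  rw [hd] at key
  have key2 : (X:CP)^(R+1) * Polynomial.derivative (w (X^n))
      = ∑ t ∈ Finset.range N, ((q t).eval (n:ℂ) * ((n:ℂ) + t)) • (X:CP)^(n+t)
        - ((R:ℂ)) • ∑ t ∈ Finset.range N, ((q t).eval (n:ℂ)) • (X:CP)^(n+t) := by
    rw [← h n, ← key]
    abel
  rw [key2, Finset.smul_sum, ← Finset.sum_sub_distrib]
  apply Finset.sum_congr rfl
  intro t _
  simp only [eval_mul, eval_add, eval_X, eval_C, smul_smul, ← sub_smul]
  congr 1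
  ring
def WGens : Set E :=
  {LinearMap.mulLeft ℂ (X : CP), (Polynomial.derivative : CP →ₗ[ℂ] CP)}

lemma exists_data_common {w₁ w₂ : E} (h₁ : ∃ R N q, HasData w₁ R N q)
    (h₂ : ∃ R N q, HasData w₂ R N q) :
    ∃ R N q₁ q₂, HasData w₁ R N q₁ ∧ HasData w₂ R N q₂ := by
  obtain ⟨R₁, N₁, q₁, hd₁⟩ := h₁
  obtain ⟨R₂, N₂, q₂, hd₂⟩ := h₂
  set R := max R₁ R₂
  set N := max (N₁ + (R - R₁)) (N₂ + (R - R₂))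
  obtain ⟨q₁', h₁'⟩ := data_upgrade hd₁ (le_max_left _ _) (le_max_left _ _)
  obtain ⟨q₂', h₂'⟩ := data_upgrade hd₂ (le_max_right _ _) (le_max_right _ _)
  exact ⟨R, N, q₁', q₂', h₁', h₂'⟩

lemma exists_data_of_mem_closure (x : E) (hx : x ∈ Submonoid.closure WGens) :
    ∃ R N q, HasData x R N q := by
  obtain ⟨l, hl, rfl⟩ := Submonoid.exists_list_of_mem_closure hx
  clear hx
  induction l with
  | nil => exact ⟨0, 1, fun _ => 1, by simpa using data_one⟩
  | cons a l ih =>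
    obtain ⟨R, N, q, hd⟩ := ih (fun y hy => hl y (List.mem_cons_of_mem a hy))
    rw [List.prod_cons]
    rcases hl a List.mem_cons_self with ha | ha
    · rw [ha]
      exact ⟨R, N + 1, _, data_lmul_z hd⟩
    · rw [Set.mem_singleton_iff.1 ha]
      exact ⟨R + 1, N, _, data_lmul_d hd⟩

lemma exists_data_of_mem (w : E) (hw : w ∈ Algebra.adjoin ℂ WGens) :
    ∃ R N q, HasData w R N q := by
  have hw' : w ∈ Submodule.span ℂ ((Submonoid.closure WGens : Submonoid E) : Set E) := by
    rw [← Algebra.adjoin_eq_span]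
    exact hw
  refine Submodule.span_induction ?_ ?_ ?_ ?_ hw'
  · exact fun x hx => exists_data_of_mem_closure x hx
  · exact ⟨0, 1, fun _ => 0, data_zero⟩
  · intro x y _ _ hx hy
    obtain ⟨R, N, q₁, q₂, h₁, h₂⟩ := exists_data_common hx hy
    exact ⟨R, N, _, data_add h₁ h₂⟩
  · intro c x _ hx
    obtain ⟨R, N, q, hd⟩ := hx
    exact ⟨R, N, _, data_csmul c hd⟩
lemma sumform_coeff (N n j : ℕ) (a : ℕ → ℂ) :
    (∑ t ∈ Finset.range N, a t • (X:CP)^(n+t)).coeff j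
      = ∑ t ∈ Finset.range N, (if n + t = j then a t else 0) := by
  rw [Polynomial.finset_sum_coeff]
  apply Finset.sum_congr rfl
  intro t _
  rw [Polynomial.coeff_smul, Polynomial.coeff_X_pow]
  by_cases h : j = n + t
  · simp [h]
  · simp [h, Ne.symm h]

lemma sumform_coeff_eq (N n : ℕ) (a : ℕ → ℂ) {t : ℕ} (ht : t < N) :
    (∑ t ∈ Finset.range N, a t • (X:CP)^(n+t)).coeff (n + t) = a t := by
  rw [sumform_coeff]
  rw [Finset.sum_eq_single t]
  · simp
  · intro s _ hs
    rw [if_neg (by omega)]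
  · intro hmem
    exact absurd (Finset.mem_range.2 ht) hmem

lemma sumform_coeff_zero (N n j : ℕ) (a : ℕ → ℂ)
    (h : ∀ t, t < N → n + t = j → a t = 0) :
    (∑ t ∈ Finset.range N, a t • (X:CP)^(n+t)).coeff j = 0 := by
  rw [sumform_coeff]
  apply Finset.sum_eq_zero
  intro t ht
  by_cases h' : n + t = j
  · rw [if_pos h', h t (Finset.mem_range.1 ht) h']
  · rw [if_neg h']

lemma data_coeff {w R N q} (h : HasData w R N q) (n : ℕ) {t : ℕ} (ht : t < N) :
    ((X:CP)^R * w ((X:CP)^n)).coeff (n + t) = (q t).eval (n:ℂ) := by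
  rw [h n]; exact sumform_coeff_eq N n _ ht

lemma data_coeff_zero {w R N q} (h : HasData w R N q) (n j : ℕ)
    (hz : ∀ t, t < N → n + t = j → (q t).eval (n:ℂ) = 0) :
    ((X:CP)^R * w ((X:CP)^n)).coeff j = 0 := by
  rw [h n]; exact sumform_coeff_zero N n j _ hz

lemma coeff_X_pow_mul_lt {p : CP} {R j : ℕ} (hj : j < R) : ((X:CP)^R * p).coeff j = 0 := by
  rw [mul_comm, Polynomial.coeff_mul_X_pow', if_neg (by omega)]

lemma coeff_X_pow_mul_add {p : CP} (R j : ℕ) : ((X:CP)^R * p).coeff (R + j) = p.coeff j := by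
  rw [mul_comm, Polynomial.coeff_mul_X_pow', if_pos (by omega)]
  congr 1
  omega

lemma data_Z {w R N q} (h : HasData w R N q) {n t : ℕ} (ht : t < N) (hlt : n + t < R) :
    (q t).eval (n:ℂ) = 0 := by
  rw [← data_coeff h n ht]
  exact coeff_X_pow_mul_lt hlt

lemma data_apply {w : E} {R N q} (h : HasData w R N q) (p : CP) :
    (X:CP)^R * w p
      = ∑ m ∈ p.support, (p.coeff m) •
          ∑ t ∈ Finset.range N, ((q t).eval (m:ℂ)) • (X:CP)^(m+t) := by
  conv_lhs => rw [p.as_sum_support]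
  rw [map_sum, Finset.mul_sum]
  apply Finset.sum_congr rfl
  intro m _
  have : (Polynomial.monomial m) (p.coeff m) = (p.coeff m) • (X:CP)^m := by
    rw [Polynomial.smul_X_eq_monomial]
  rw [this, map_smul, mul_smul_comm, h m]

lemma data_apply_coeff {w : E} {R N q} (h : HasData w R N q) (p : CP) (j : ℕ) :
    ((X:CP)^R * w p).coeff j
      = ∑ m ∈ p.support, (p.coeff m) *
          (∑ t ∈ Finset.range N, (if m + t = j then (q t).eval (m:ℂ) else 0)) := by
  rw [data_apply h p, Polynomial.finset_sum_coeff]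
  apply Finset.sum_congr rfl
  intro m _
  rw [Polynomial.coeff_smul, sumform_coeff]
  rfl
lemma data_lead {w : E} {R N q} (h : HasData w R N q) {t1 : ℕ} (ht1 : t1 < N)
    (hmax : ∀ t, t1 < t → t < N → q t = 0) {p : CP} (hp : p ≠ 0) :
    ((X:CP)^R * w p).coeff (p.natDegree + t1)
      = (q t1).eval (p.natDegree : ℂ) * p.leadingCoeff := by
  rw [data_apply_coeff h]
  rw [Finset.sum_eq_single_of_mem p.natDegree (Polynomial.natDegree_mem_support_of_nonzero hp)]
  · rw [Finset.sum_eq_single_of_mem t1 (Finset.mem_range.2 ht1)]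
    · rw [if_pos rfl]
      exact mul_comm _ _
    · intro s _ hs
      rw [if_neg (by omega)]
  · intro m hm hmne
    have hmle : m ≤ p.natDegree := Polynomial.le_natDegree_of_mem_supp m hm
    have hsum : (∑ t ∈ Finset.range N,
        (if m + t = p.natDegree + t1 then (q t).eval (m:ℂ) else 0)) = 0 := by
      apply Finset.sum_eq_zero
      intro t ht
      by_cases he : m + t = p.natDegree + t1
      · rw [if_pos he, hmax t (by omega) (Finset.mem_range.1 ht), eval_zero]
      · rw [if_neg he]
    rw [hsum, mul_zero]

lemma data_lead_zero {w : E} {R N q} (h : HasData w R N q) {t1 : ℕ}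
    (hmax : ∀ t, t1 < t → t < N → q t = 0) (p : CP) {j : ℕ} (hj : p.natDegree + t1 < j) :
    ((X:CP)^R * w p).coeff j = 0 := by
  rw [data_apply_coeff h]
  apply Finset.sum_eq_zero
  intro m hm
  have hmle : m ≤ p.natDegree := Polynomial.le_natDegree_of_mem_supp m hm
  have hsum : (∑ t ∈ Finset.range N, (if m + t = j then (q t).eval (m:ℂ) else 0)) = 0 := by
    apply Finset.sum_eq_zero
    intro t ht
    by_cases he : m + t = j
    · rw [if_pos he, hmax t (by omega) (Finset.mem_range.1 ht), eval_zero]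
    · rw [if_neg he]
  rw [hsum, mul_zero]

lemma data_trail {w : E} {R N q} (h : HasData w R N q) {t0 : ℕ} (ht0 : t0 < N)
    (hmin : ∀ t, t < t0 → q t = 0) {p : CP} (hp : p ≠ 0) :
    ((X:CP)^R * w p).coeff (p.natTrailingDegree + t0)
      = (q t0).eval (p.natTrailingDegree : ℂ) * p.trailingCoeff := by
  rw [data_apply_coeff h]
  rw [Finset.sum_eq_single_of_mem p.natTrailingDegree
      (Polynomial.natTrailingDegree_mem_support_of_nonzero hp)]
  · rw [Finset.sum_eq_single_of_mem t0 (Finset.mem_range.2 ht0)]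
    · rw [if_pos rfl]
      exact mul_comm _ _
    · intro s _ hs
      rw [if_neg (by omega)]
  · intro m hm hmne
    have hmge : p.natTrailingDegree ≤ m := Polynomial.natTrailingDegree_le_of_mem_supp m hm
    have hsum : (∑ t ∈ Finset.range N,
        (if m + t = p.natTrailingDegree + t0 then (q t).eval (m:ℂ) else 0)) = 0 := by
      apply Finset.sum_eq_zero
      intro t ht
      by_cases he : m + t = p.natTrailingDegree + t0
      · rw [if_pos he, hmin t (by omega), eval_zero]
      · rw [if_neg he]
    rw [hsum, mul_zero]

lemma data_trail_zero {w : E} {R N q} (h : HasData w R N q) {t0 : ℕ}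
    (hmin : ∀ t, t < t0 → q t = 0) (p : CP) {j : ℕ} (hj : j < p.natTrailingDegree + t0) :
    ((X:CP)^R * w p).coeff j = 0 := by
  rw [data_apply_coeff h]
  apply Finset.sum_eq_zero
  intro m hm
  have hmge : p.natTrailingDegree ≤ m := Polynomial.natTrailingDegree_le_of_mem_supp m hm
  have hsum : (∑ t ∈ Finset.range N, (if m + t = j then (q t).eval (m:ℂ) else 0)) = 0 := by
    apply Finset.sum_eq_zero
    intro t ht
    by_cases he : m + t = j
    · rw [if_pos he, hmin t (by omega), eval_zero]
    · rw [if_neg he]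
  rw [hsum, mul_zero]

lemma data_w_eq_zero {w : E} {R N q} (h : HasData w R N q) (hq : ∀ t, t < N → q t = 0) :
    w = 0 := by
  apply LinearMap.ext
  intro p
  have h2 : (X:CP)^R * w p = 0 := by
    rw [data_apply h p]
    apply Finset.sum_eq_zero
    intro m _
    have : (∑ t ∈ Finset.range N, ((q t).eval (m:ℂ)) • (X:CP)^(m+t)) = 0 := by
      apply Finset.sum_eq_zero
      intro t ht
      rw [hq t (Finset.mem_range.1 ht), eval_zero, zero_smul]
    rw [this, smul_zero]
  have hX : ((X:CP)^R) ≠ 0 := pow_ne_zero _ Polynomial.X_ne_zero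
  rcases mul_eq_zero.1 h2 with h' | h'
  · exact absurd h' hX
  · simpa using h'

lemma data_support_nonempty {w : E} {R N q} (h : HasData w R N q) (hw : w ≠ 0) :
    ((Finset.range N).filter (fun t => q t ≠ 0)).Nonempty := by
  rw [Finset.filter_nonempty_iff]
  by_contra hc
  push_neg at hc
  exact hw (data_w_eq_zero h (fun t ht => hc t (Finset.mem_range.2 ht)))

lemma eval_ne_zero_of_large {q : CP} (hq : q ≠ 0) :
    ∃ M : ℕ, ∀ n : ℕ, M ≤ n → q.eval (n:ℂ) ≠ 0 := by
  have hf : ({x : ℂ | q.IsRoot x}).Finite := Polynomial.finite_setOf_isRoot hq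
  have hfin : ({n : ℕ | q.eval (n:ℂ) = 0}).Finite := by
    have : ({n : ℕ | q.eval (n:ℂ) = 0}) = (fun n : ℕ => (n:ℂ)) ⁻¹' {x : ℂ | q.IsRoot x} := rfl
    rw [this]
    exact Set.Finite.preimage (Set.injOn_of_injective Nat.cast_injective) hf
  obtain ⟨M, hM⟩ := hfin.bddAbove
  refine ⟨M + 1, fun n hn hroot => ?_⟩
  have := hM hroot
  omega
lemma data_comp {w₁ w₂ : E} {R₁ N₁ q₁ R₂ N₂ q₂}
    (h₁ : HasData w₁ R₁ N₁ q₁) (h₂ : HasData w₂ R₂ N₂ q₂)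
    {t1p t1m t2p t2m : ℕ}
    (ht1p : t1p < N₁) (ht1m : t1m < N₁) (ht2p : t2p < N₂) (ht2m : t2m < N₂)
    (hq1p : q₁ t1p ≠ 0) (hq1m : q₁ t1m ≠ 0) (hq2p : q₂ t2p ≠ 0) (hq2m : q₂ t2m ≠ 0)
    (hmax1 : ∀ t, t1p < t → t < N₁ → q₁ t = 0) (hmin1 : ∀ t, t < t1m → q₁ t = 0)
    (hmax2 : ∀ t, t2p < t → t < N₂ → q₂ t = 0) (hmin2 : ∀ t, t < t2m → q₂ t = 0) :
    ∃ M : ℕ, ∀ n : ℕ, M ≤ n →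
      ((X:CP)^(R₁+R₂) * w₁ (w₂ ((X:CP)^n))).coeff (n + t2p + t1p) ≠ 0 ∧
      ((X:CP)^(R₁+R₂) * w₁ (w₂ ((X:CP)^n))).coeff (n + t2m + t1m) ≠ 0 := by
  obtain ⟨M1p, hM1p⟩ := eval_ne_zero_of_large hq1p
  obtain ⟨M1m, hM1m⟩ := eval_ne_zero_of_large hq1m
  obtain ⟨M2p, hM2p⟩ := eval_ne_zero_of_large hq2p
  obtain ⟨M2m, hM2m⟩ := eval_ne_zero_of_large hq2m
  refine ⟨M1p + M1m + M2p + M2m + R₂, fun n hn => ?_⟩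
  set p : CP := w₂ ((X:CP)^n) with hp_def
  have hXR₂ : ((X:CP)^R₂) ≠ 0 := pow_ne_zero _ Polynomial.X_ne_zero
  -- the scaled inner polynomial
  have hs_top : ((X:CP)^R₂ * p).coeff (n + t2p) = (q₂ t2p).eval (n:ℂ) := data_coeff h₂ n ht2p
  have hs_top_ne : ((X:CP)^R₂ * p).coeff (n + t2p) ≠ 0 := by
    rw [hs_top]; exact hM2p n (by omega)
  have hs_bot : ((X:CP)^R₂ * p).coeff (n + t2m) = (q₂ t2m).eval (n:ℂ) := data_coeff h₂ n ht2m
  have hs_bot_ne : ((X:CP)^R₂ * p).coeff (n + t2m) ≠ 0 := by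
    rw [hs_bot]; exact hM2m n (by omega)
  have hs_ne : (X:CP)^R₂ * p ≠ 0 := fun hc => hs_top_ne (by rw [hc]; simp)
  have hp_ne : p ≠ 0 := fun hc => hs_ne (by rw [hc, mul_zero])
  -- natDegree of s
  have hs_deg : ((X:CP)^R₂ * p).natDegree = n + t2p := by
    apply le_antisymm
    · apply Polynomial.natDegree_le_iff_coeff_eq_zero.2
      intro j hj
      apply data_coeff_zero h₂
      intro t ht hjt
      rw [hmax2 t (by omega) ht, eval_zero]
    · exact Polynomial.le_natDegree_of_ne_zero hs_top_ne
  have hs_tdeg : ((X:CP)^R₂ * p).natTrailingDegree = n + t2m := by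
    apply le_antisymm
    · exact Polynomial.natTrailingDegree_le_of_ne_zero hs_bot_ne
    · apply Polynomial.le_natTrailingDegree hs_ne
      intro j hj
      apply data_coeff_zero h₂
      intro t ht hjt
      rw [hmin2 t (by omega), eval_zero]
  have hD : R₂ + p.natDegree = n + t2p := by
    rw [← hs_deg, Polynomial.natDegree_mul hXR₂ hp_ne, Polynomial.natDegree_X_pow]
  have hT : R₂ + p.natTrailingDegree = n + t2m := by
    rw [← hs_tdeg, Polynomial.natTrailingDegree_mul hXR₂ hp_ne, Polynomial.natTrailingDegree_X_pow]
  have hlead : p.leadingCoeff = (q₂ t2p).eval (n:ℂ) := by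
    have : ((X:CP)^R₂ * p).leadingCoeff = p.leadingCoeff := by
      rw [Polynomial.leadingCoeff_mul, Polynomial.leadingCoeff_X_pow, one_mul]
    rw [← this, Polynomial.leadingCoeff, hs_deg, hs_top]
  have htrail : p.trailingCoeff = (q₂ t2m).eval (n:ℂ) := by
    have htc : ((X:CP)^R₂ * p).trailingCoeff = p.trailingCoeff := by
      rw [Polynomial.trailingCoeff_mul]
      have : ((X:CP)^R₂).trailingCoeff = 1 := by simp [Polynomial.trailingCoeff]
      rw [this, one_mul]
    rw [← htc, Polynomial.trailingCoeff, hs_tdeg, hs_bot]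
  -- rearrange outer product
  have hsplit : (X:CP)^(R₁+R₂) * w₁ p = (X:CP)^R₂ * ((X:CP)^R₁ * w₁ p) := by
    rw [← mul_assoc, ← pow_add, Nat.add_comm R₂ R₁]
  constructor
  · have hidx : n + t2p + t1p = R₂ + (p.natDegree + t1p) := by omega
    rw [hsplit, hidx, coeff_X_pow_mul_add, data_lead h₁ ht1p hmax1 hp_ne]
    apply mul_ne_zero
    · apply hM1p
      omega
    · rw [hlead]
      exact hM2p n (by omega)
  · have hidx : n + t2m + t1m = R₂ + (p.natTrailingDegree + t1m) := by omega
    rw [hsplit, hidx, coeff_X_pow_mul_add, data_trail h₁ ht1m hmin1 hp_ne]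
    apply mul_ne_zero
    · apply hM1m
      omega
    · rw [htrail]
      exact hM2m n (by omega)
lemma sum_support_X_pow (u : CP) (T : ℕ) :
    ∑ m ∈ u.support, (u.coeff m) • (X:CP)^(m+T) = (X:CP)^T * u := by
  conv_rhs => rw [u.as_sum_support]
  rw [Finset.mul_sum]
  apply Finset.sum_congr rfl
  intro m _
  rw [← Polynomial.smul_X_eq_monomial, mul_smul_comm]
  congr 1
  rw [pow_add, mul_comm]

lemma data_homog_apply_coeff {w : E} {R N : ℕ} {q : ℕ → CP} {T : ℕ}
    (h : HasData w R N q) (hT : T < N) (hhom : ∀ t, t < N → t ≠ T → q t = 0)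
    (p : CP) (i : ℕ) :
    ((X:CP)^R * w p).coeff (i + T) = p.coeff i * (q T).eval (i:ℂ) := by
  rw [data_apply_coeff h]
  rw [Finset.sum_eq_single i]
  · congr 1
    rw [Finset.sum_eq_single T]
    · rw [if_pos rfl]
    · intro t ht htne
      rw [hhom t (Finset.mem_range.1 ht) htne, eval_zero, ite_self]
    · intro hmem
      exact absurd (Finset.mem_range.2 hT) hmem
  · intro m _ hmne
    have : (∑ t ∈ Finset.range N, (if m + t = i + T then (q t).eval (m:ℂ) else 0)) = 0 := by
      apply Finset.sum_eq_zero
      intro t ht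
      by_cases he : m + t = i + T
      · have htne : t ≠ T := by omega
        rw [if_pos he, hhom t (Finset.mem_range.1 ht) htne, eval_zero]
      · rw [if_neg he]
    rw [this, mul_zero]
  · intro hmem
    rw [Polynomial.notMem_support_iff.1 hmem, zero_mul]

lemma data_homog_apply_coeff_lt {w : E} {R N : ℕ} {q : ℕ → CP} {T : ℕ}
    (h : HasData w R N q) (hhom : ∀ t, t < N → t ≠ T → q t = 0)
    (p : CP) {j : ℕ} (hj : j < T) :
    ((X:CP)^R * w p).coeff j = 0 := by
  rw [data_apply_coeff h]
  apply Finset.sum_eq_zero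
  intro m _
  have : (∑ t ∈ Finset.range N, (if m + t = j then (q t).eval (m:ℂ) else 0)) = 0 := by
    apply Finset.sum_eq_zero
    intro t ht
    by_cases he : m + t = j
    · have htne : t ≠ T := by omega
      rw [if_pos he, hhom t (Finset.mem_range.1 ht) htne, eval_zero]
    · rw [if_neg he]
  rw [this, mul_zero]

lemma data_homog_apply {w : E} {R N : ℕ} {q : ℕ → CP} {T : ℕ} {lam : ℂ}
    (h : HasData w R N q) (hT : T < N) (hhom : ∀ t, t < N → t ≠ T → q t = 0)
    (hC : q T = Polynomial.C lam) (p : CP) :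
    (X:CP)^R * w p = lam • ((X:CP)^T * p) := by
  rw [data_apply h p, ← sum_support_X_pow p T, Finset.smul_sum]
  apply Finset.sum_congr rfl
  intro m _
  have hinner : (∑ t ∈ Finset.range N, ((q t).eval (m:ℂ)) • (X:CP)^(m+t))
      = lam • (X:CP)^(m+T) := by
    rw [Finset.sum_eq_single T]
    · rw [hC, eval_C]
    · intro t ht htne
      rw [hhom t (Finset.mem_range.1 ht) htne, eval_zero, zero_smul]
    · intro hmem
      exact absurd (Finset.mem_range.2 hT) hmem
  rw [hinner, smul_comm]
-- ### glue to the Weyl algebra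

lemma Wmem_data (g : WeylAlgebra) : ∃ R N q, HasData (g : E) R N q :=
  exists_data_of_mem _ g.2

lemma z2_apply (p : CP) : ((Wz^2 : WeylAlgebra) : E) p = (X:CP)^2 * p := by
  show (X:CP) * ((X:CP) * p) = _
  ring

lemma one_sub_apply (p : CP) :
    ((1 - Wz * Wd : WeylAlgebra) : E) p = p - (X:CP) * Polynomial.derivative p := rfl

lemma z2_ne : (Wz^2 : WeylAlgebra) ≠ 0 := by
  intro h
  have h2 : ((Wz^2 : WeylAlgebra) : E) 1 = 0 := by rw [h]; rfl
  rw [z2_apply, mul_one] at h2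
  exact pow_ne_zero 2 Polynomial.X_ne_zero h2

lemma one_sub_ne : (1 - Wz * Wd : WeylAlgebra) ≠ 0 := by
  intro h
  have h2 : ((1 - Wz * Wd : WeylAlgebra) : E) 1 = 0 := by rw [h]; rfl
  rw [one_sub_apply] at h2
  simp at h2

/-- the right ideal of operators whose range has zero `x`-coefficient -/
noncomputable def Scond : Submodule (WeylAlgebra)ᵐᵒᵖ WeylAlgebra where
  carrier := {w : WeylAlgebra | ∀ p : CP, ((w : E) p).coeff 1 = 0}
  add_mem' := by
    intro a b ha hb p
    show (((a : E) + (b : E)) p).coeff 1 = 0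
    rw [LinearMap.add_apply, Polynomial.coeff_add, ha p, hb p, add_zero]
  zero_mem' := by
    intro p
    show ((0 : E) p).coeff 1 = 0
    simp
  smul_mem' := by
    intro a w hw p
    rw [MulOpposite.smul_eq_mul_unop]
    show (((w : E)) (((MulOpposite.unop a : WeylAlgebra) : E) p)).coeff 1 = 0
    exact hw _

lemma z2_mem_S : (Wz^2 : WeylAlgebra) ∈ Scond := by
  intro p
  rw [z2_apply]
  exact coeff_X_pow_mul_lt (by omega)

lemma one_sub_mem_S : (1 - Wz * Wd : WeylAlgebra) ∈ Scond := by
  intro p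
  rw [one_sub_apply, Polynomial.coeff_sub]
  have : ((X:CP) * Polynomial.derivative p).coeff 1 = (Polynomial.derivative p).coeff 0 := by
    have := coeff_X_pow_mul_add (p := Polynomial.derivative p) 1 0
    simpa using this
  rw [this, Polynomial.coeff_derivative]
  simp

lemma span_le_S :
    Submodule.span (WeylAlgebra)ᵐᵒᵖ ({Wz ^ 2, 1 - Wz * Wd} : Set WeylAlgebra) ≤ Scond := by
  rw [Submodule.span_le]
  intro x hx
  rcases hx with h | h
  · rw [h]; exact z2_mem_S
  · rw [Set.mem_singleton_iff.1 h]; exact one_sub_mem_S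

lemma one_not_mem_S : (1 : WeylAlgebra) ∉ Scond := by
  intro h
  have := h (X : CP)
  have h1 : ((1 : WeylAlgebra) : E) (X : CP) = (X : CP) := rfl
  rw [h1, Polynomial.coeff_X_one] at this
  exact one_ne_zero this

lemma span_ne_bot :
    Submodule.span (WeylAlgebra)ᵐᵒᵖ ({Wz ^ 2, 1 - Wz * Wd} : Set WeylAlgebra) ≠ ⊥ := by
  intro h
  have : (Wz^2 : WeylAlgebra) ∈ Submodule.span (WeylAlgebra)ᵐᵒᵖ ({Wz ^ 2, 1 - Wz * Wd} : Set WeylAlgebra) :=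
    Submodule.subset_span (Set.mem_insert _ _)
  rw [h, Submodule.mem_bot] at this
  exact z2_ne this

lemma span_ne_top :
    Submodule.span (WeylAlgebra)ᵐᵒᵖ ({Wz ^ 2, 1 - Wz * Wd} : Set WeylAlgebra) ≠ ⊤ := by
  intro h
  apply one_not_mem_S
  apply span_le_S
  rw [h]
  trivial
lemma not_principal :
    ¬∃ g : WeylAlgebra,
        Submodule.span (WeylAlgebra)ᵐᵒᵖ ({Wz ^ 2, 1 - Wz * Wd} : Set WeylAlgebra) =
          Submodule.span (WeylAlgebra)ᵐᵒᵖ ({g} : Set WeylAlgebra) := by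
  rintro ⟨g, hg⟩
  -- divisibility data
  have hz2I : (Wz^2 : WeylAlgebra) ∈ Submodule.span (WeylAlgebra)ᵐᵒᵖ ({g} : Set WeylAlgebra) := by
    rw [← hg]; exact Submodule.subset_span (Set.mem_insert _ _)
  have h1I : (1 - Wz * Wd : WeylAlgebra) ∈ Submodule.span (WeylAlgebra)ᵐᵒᵖ ({g} : Set WeylAlgebra) := by
    rw [← hg]; exact Submodule.subset_span (Set.mem_insert_of_mem _ rfl)
  obtain ⟨a, ha⟩ := Submodule.mem_span_singleton.1 hz2I
  obtain ⟨b, hb⟩ := Submodule.mem_span_singleton.1 h1I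
  set c : WeylAlgebra := MulOpposite.unop a with hcdef
  set d : WeylAlgebra := MulOpposite.unop b with hddef
  have hc : g * c = Wz ^ 2 := by rw [← MulOpposite.smul_eq_mul_unop]; exact ha
  have hd : g * d = 1 - Wz * Wd := by rw [← MulOpposite.smul_eq_mul_unop]; exact hb
  -- operator level
  have hgc : ∀ p : CP, (g : E) ((c : E) p) = (X:CP)^2 * p := by
    intro p
    have h1 : ((g * c : WeylAlgebra) : E) p = ((Wz^2 : WeylAlgebra) : E) p := by rw [hc]
    rw [z2_apply] at h1
    exact h1
  have hgd : ∀ p : CP, (g : E) ((d : E) p) = p - (X:CP) * Polynomial.derivative p := by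
    intro p
    have h1 : ((g * d : WeylAlgebra) : E) p = ((1 - Wz * Wd : WeylAlgebra) : E) p := by rw [hd]
    rw [one_sub_apply] at h1
    exact h1
  have hgne : (g : E) ≠ 0 := by
    intro h0
    have := hgc 1
    rw [h0] at this
    simp at this
    exact pow_ne_zero 2 Polynomial.X_ne_zero this.symm
  have hcne : (c : E) ≠ 0 := by
    intro h0
    have := hgc 1
    rw [h0] at this
    simp at this
    have h2 : ((X:CP)^2) ≠ 0 := pow_ne_zero 2 Polynomial.X_ne_zero
    exact h2 this.symm
  have hdne : (d : E) ≠ 0 := by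
    intro h0
    have := hgd 1
    rw [h0] at this
    simp at this
  -- data
  obtain ⟨Rg, Ng, qg, hdg⟩ := Wmem_data g
  obtain ⟨Rc, Nc, qc, hdc⟩ := Wmem_data c
  obtain ⟨Rd, Nd, qd, hdd⟩ := Wmem_data d
  -- extremes
  have hsgne := data_support_nonempty hdg hgne
  have hscne := data_support_nonempty hdc hcne
  have hsdne := data_support_nonempty hdd hdne
  set Tgp := ((Finset.range Ng).filter (fun t => qg t ≠ 0)).max' hsgne with hTgp_def
  set Tgm := ((Finset.range Ng).filter (fun t => qg t ≠ 0)).min' hsgne with hTgm_def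
  set Tcp := ((Finset.range Nc).filter (fun t => qc t ≠ 0)).max' hscne with hTcp_def
  set Tcm := ((Finset.range Nc).filter (fun t => qc t ≠ 0)).min' hscne with hTcm_def
  set Tdp := ((Finset.range Nd).filter (fun t => qd t ≠ 0)).max' hsdne with hTdp_def
  set Tdm := ((Finset.range Nd).filter (fun t => qd t ≠ 0)).min' hsdne with hTdm_def
  have hTgp_mem := Finset.mem_filter.1 (Finset.max'_mem _ hsgne)
  have hTgm_mem := Finset.mem_filter.1 (Finset.min'_mem _ hsgne)
  have hTcp_mem := Finset.mem_filter.1 (Finset.max'_mem _ hscne)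
  have hTcm_mem := Finset.mem_filter.1 (Finset.min'_mem _ hscne)
  have hTdp_mem := Finset.mem_filter.1 (Finset.max'_mem _ hsdne)
  have hTdm_mem := Finset.mem_filter.1 (Finset.min'_mem _ hsdne)
  have hmaxg : ∀ t, Tgp < t → t < Ng → qg t = 0 := by
    intro t h1 h2
    by_contra hne
    have hmemf : t ∈ (Finset.range Ng).filter (fun t => qg t ≠ 0) := by
      simp only [Finset.mem_filter, Finset.mem_range]
      exact ⟨h2, hne⟩
    have := Finset.le_max' _ t hmemf
    omega
  have hming : ∀ t, t < Tgm → qg t = 0 := by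
    intro t h1
    by_contra hne
    have h2 : t < Ng := by
      have := Finset.mem_range.1 hTgm_mem.1
      omega
    have hmemf : t ∈ (Finset.range Ng).filter (fun t => qg t ≠ 0) := by
      simp only [Finset.mem_filter, Finset.mem_range]
      exact ⟨h2, hne⟩
    have := Finset.min'_le _ t hmemf
    omega
  have hmaxc : ∀ t, Tcp < t → t < Nc → qc t = 0 := by
    intro t h1 h2
    by_contra hne
    have hmemf : t ∈ (Finset.range Nc).filter (fun t => qc t ≠ 0) := by
      simp only [Finset.mem_filter, Finset.mem_range]
      exact ⟨h2, hne⟩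
    have := Finset.le_max' _ t hmemf
    omega
  have hminc : ∀ t, t < Tcm → qc t = 0 := by
    intro t h1
    by_contra hne
    have h2 : t < Nc := by
      have := Finset.mem_range.1 hTcm_mem.1
      omega
    have hmemf : t ∈ (Finset.range Nc).filter (fun t => qc t ≠ 0) := by
      simp only [Finset.mem_filter, Finset.mem_range]
      exact ⟨h2, hne⟩
    have := Finset.min'_le _ t hmemf
    omega
  have hmaxd : ∀ t, Tdp < t → t < Nd → qd t = 0 := by
    intro t h1 h2
    by_contra hne
    have hmemf : t ∈ (Finset.range Nd).filter (fun t => qd t ≠ 0) := by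
      simp only [Finset.mem_filter, Finset.mem_range]
      exact ⟨h2, hne⟩
    have := Finset.le_max' _ t hmemf
    omega
  have hmind : ∀ t, t < Tdm → qd t = 0 := by
    intro t h1
    by_contra hne
    have h2 : t < Nd := by
      have := Finset.mem_range.1 hTdm_mem.1
      omega
    have hmemf : t ∈ (Finset.range Nd).filter (fun t => qd t ≠ 0) := by
      simp only [Finset.mem_filter, Finset.mem_range]
      exact ⟨h2, hne⟩
    have := Finset.min'_le _ t hmemf
    omega
  -- composite degree equations
  obtain ⟨M₁, hM₁⟩ := data_comp hdg hdc
    (Finset.mem_range.1 hTgp_mem.1) (Finset.mem_range.1 hTgm_mem.1)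
    (Finset.mem_range.1 hTcp_mem.1) (Finset.mem_range.1 hTcm_mem.1)
    hTgp_mem.2 hTgm_mem.2 hTcp_mem.2 hTcm_mem.2 hmaxg hming hmaxc hminc
  obtain ⟨M₂, hM₂⟩ := data_comp hdg hdd
    (Finset.mem_range.1 hTgp_mem.1) (Finset.mem_range.1 hTgm_mem.1)
    (Finset.mem_range.1 hTdp_mem.1) (Finset.mem_range.1 hTdm_mem.1)
    hTgp_mem.2 hTgm_mem.2 hTdp_mem.2 hTdm_mem.2 hmaxg hming hmaxd hmind
  set n₀ := M₁ + M₂ + 2 with hn₀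
  obtain ⟨hA1, hA2⟩ := hM₁ n₀ (by omega)
  obtain ⟨hB1, hB2⟩ := hM₂ n₀ (by omega)
  rw [hgc] at hA1 hA2
  rw [hgd] at hB1 hB2
  have hXmul : (X:CP)^(Rg+Rc) * ((X:CP)^2 * (X:CP)^n₀) = (X:CP)^(Rg + Rc + 2 + n₀) := by
    rw [← pow_add, ← pow_add]
    congr 1
    omega
  rw [hXmul, Polynomial.coeff_X_pow] at hA1 hA2
  have eq1 : n₀ + Tcp + Tgp = Rg + Rc + 2 + n₀ := by
    by_contra hne
    rw [if_neg hne] at hA1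
    exact hA1 rfl
  have eq2 : n₀ + Tcm + Tgm = Rg + Rc + 2 + n₀ := by
    by_contra hne
    rw [if_neg hne] at hA2
    exact hA2 rfl
  have hdX : (X:CP)^n₀ - (X:CP) * Polynomial.derivative ((X:CP)^n₀)
      = (1 - (n₀:ℂ)) • (X:CP)^n₀ := by
    rw [X_mul_derivative_X_pow, sub_smul, one_smul]
  rw [hdX] at hB1 hB2
  have hXmul2 : (X:CP)^(Rg+Rd) * ((1 - (n₀:ℂ)) • (X:CP)^n₀)
      = (1 - (n₀:ℂ)) • (X:CP)^(Rg + Rd + n₀) := by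
    rw [mul_smul_comm, ← pow_add]
  rw [hXmul2] at hB1 hB2
  have hcoeffsmul : ∀ j : ℕ, ((1 - (n₀:ℂ)) • (X:CP)^(Rg + Rd + n₀)).coeff j
      = (1 - (n₀:ℂ)) * (if j = Rg + Rd + n₀ then 1 else 0) := by
    intro j
    rw [Polynomial.coeff_smul, Polynomial.coeff_X_pow]
    rfl
  rw [hcoeffsmul] at hB1 hB2
  have eq3 : n₀ + Tdp + Tgp = Rg + Rd + n₀ := by
    by_contra hne
    rw [if_neg hne, mul_zero] at hB1
    exact hB1 rfl
  have eq4 : n₀ + Tdm + Tgm = Rg + Rd + n₀ := by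
    by_contra hne
    rw [if_neg hne, mul_zero] at hB2
    exact hB2 rfl
  have hgmono : Tgm ≤ Tgp := Finset.min'_le _ _ (Finset.max'_mem _ hsgne)
  have hcmono : Tcm ≤ Tcp := Finset.min'_le _ _ (Finset.max'_mem _ hscne)
  have hdmono : Tdm ≤ Tdp := Finset.min'_le _ _ (Finset.max'_mem _ hsdne)
  have hTeq : Tgp = Tgm := by omega
  -- g is homogeneous of weight Tgp - Rg
  have hhom : ∀ t, t < Ng → t ≠ Tgp → qg t = 0 := by
    intro t h1 h2
    rcases Nat.lt_or_ge t Tgp with hlt | hge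
    · exact hming t (by omega)
    · exact hmaxg t (by omega) h1
  have hTgp_lt : Tgp < Ng := Finset.mem_range.1 hTgp_mem.1
  -- T ≤ Rg + 2
  have hT_le : Tgp ≤ Rg + 2 := by
    by_contra h'
    have h0 : (X:CP)^Rg * (g : E) ((c : E) ((X:CP)^0)) = (X:CP)^(Rg+2) := by
      rw [hgc, ← pow_add, ← pow_add]
    have hz := data_homog_apply_coeff_lt hdg hhom ((c : E) ((X:CP)^0)) (j := Rg + 2) (by omega)
    rw [h0, Polynomial.coeff_X_pow, if_pos rfl] at hz
    exact one_ne_zero hz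
  obtain ⟨δ, hδ⟩ : ∃ δ, Tgp + δ = Rg + 2 := ⟨Rg + 2 - Tgp, by omega⟩
  -- key identity A
  have keyA : ∀ n : ℕ, ((c : E) ((X:CP)^n)).coeff (n + δ) * (qg Tgp).eval ((n + δ : ℕ) : ℂ) = 1 := by
    intro n
    have e1 := data_homog_apply_coeff hdg hTgp_lt hhom ((c : E) ((X:CP)^n)) (n + δ)
    have e2 : (X:CP)^Rg * (g : E) ((c : E) ((X:CP)^n)) = (X:CP)^(n + δ + Tgp) := by
      rw [hgc, ← pow_add, ← pow_add]
      congr 1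
      omega
    rw [e2, Polynomial.coeff_X_pow, if_pos rfl] at e1
    exact e1.symm
  -- the c-coefficient is polynomial in n
  obtain ⟨U, hU⟩ : ∃ U : CP, ∀ n : ℕ, ((c : E) ((X:CP)^n)).coeff (n + δ) = U.eval (n:ℂ) := by
    by_cases hcase : Rc + δ < Nc
    · refine ⟨qc (Rc + δ), fun n => ?_⟩
      have h1 := data_coeff hdc n hcase
      have h2 := coeff_X_pow_mul_add (p := (c : E) ((X:CP)^n)) Rc (n + δ)
      have h3 : Rc + (n + δ) = n + (Rc + δ) := by omega
      rw [h3] at h2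
      rw [← h2, h1]
    · refine ⟨0, fun n => ?_⟩
      have h1 : ((X:CP)^Rc * (c : E) ((X:CP)^n)).coeff (n + (Rc + δ)) = 0 := by
        apply data_coeff_zero hdc
        intro t ht he
        omega
      have h2 := coeff_X_pow_mul_add (p := (c : E) ((X:CP)^n)) Rc (n + δ)
      have h3 : Rc + (n + δ) = n + (Rc + δ) := by omega
      rw [h3] at h2
      rw [← h2, h1, eval_zero]
  -- polynomial identity ⇒ qg Tgp is a nonzero constant
  have hPid : U * ((qg Tgp).comp ((X:CP) + C (δ:ℂ))) = 1 := by
    have hroot : ∀ n : ℕ, (U * ((qg Tgp).comp ((X:CP) + C (δ:ℂ))) - 1).IsRoot ((n:ℂ)) := by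
      intro n
      have hk := keyA n
      rw [hU n] at hk
      simp only [Polynomial.IsRoot, eval_sub, eval_mul, eval_one, eval_comp, eval_add, eval_X,
        eval_C]
      rw [sub_eq_zero]
      have hcast : ((n + δ : ℕ) : ℂ) = (n:ℂ) + (δ:ℂ) := by push_cast; ring
      rw [← hcast]
      exact hk
    have hinf : ({x : ℂ | (U * ((qg Tgp).comp ((X:CP) + C (δ:ℂ))) - 1).IsRoot x}).Infinite := by
      apply Set.infinite_of_injective_forall_mem (f := fun n : ℕ => (n : ℂ)) Nat.cast_injective
      intro n
      exact hroot n
    have h0 := Polynomial.eq_zero_of_infinite_isRoot _ hinf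
    have := sub_eq_zero.1 h0
    exact this
  have hunit : IsUnit ((qg Tgp).comp ((X:CP) + C (δ:ℂ))) :=
    IsUnit.of_mul_eq_one _ (by rw [mul_comm] at hPid; exact hPid)
  obtain ⟨lam, hlam_unit, hClam⟩ := Polynomial.isUnit_iff.1 hunit
  have hqT : qg Tgp = C lam := by
    have h1 := congrArg (fun P : CP => P.comp ((X:CP) - C (δ:ℂ))) hClam
    simp only [Polynomial.C_comp] at h1
    rw [Polynomial.comp_assoc] at h1
    have h2 : ((X:CP) + C (δ:ℂ)).comp ((X:CP) - C (δ:ℂ)) = (X:CP) := by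
      rw [Polynomial.add_comp, Polynomial.X_comp, Polynomial.C_comp, sub_add_cancel]
    rw [h2, Polynomial.comp_X] at h1
    exact h1.symm
  have hlam_ne : lam ≠ 0 := by
    intro h0
    apply hTgp_mem.2
    rw [hqT, h0, map_zero]
  -- T ≥ Rg, so g = lam • X^h with h = T - Rg; then h = 0
  have hRg_le : Rg ≤ Tgp := by
    by_contra h'
    have := data_Z hdg hTgp_lt (n := 0) (by omega)
    rw [hqT, eval_C] at this
    exact hlam_ne this
  obtain ⟨h, hh⟩ : ∃ h, Rg + h = Tgp := ⟨Tgp - Rg, by omega⟩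
  -- evaluate the d-equation at 1
  set u : CP := (d : E) ((X:CP)^0) with hu_def
  have hgu : (g : E) u = 1 := by
    rw [hu_def, hgd]
    simp
  have hBu : (X:CP)^Rg = lam • ((X:CP)^Tgp * u) := by
    have := data_homog_apply hdg hTgp_lt hhom hqT u
    rw [hgu, mul_one] at this
    exact this
  have hXRg_ne : ((X:CP)^Rg) ≠ 0 := pow_ne_zero _ Polynomial.X_ne_zero
  have hcan : (1:CP) = lam • ((X:CP)^h * u) := by
    apply mul_left_cancel₀ hXRg_ne
    rw [mul_one, mul_smul_comm, ← mul_assoc, ← pow_add, hh, ← hBu]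
  have h0 : h = 0 := by
    by_contra hne
    have := congrArg (fun p : CP => p.coeff 0) hcan
    simp only [Polynomial.coeff_one, Polynomial.coeff_smul] at this
    rw [coeff_X_pow_mul_lt (by omega)] at this
    simp at this
  -- so g is scalar multiplication by lam
  have hgp : ∀ p : CP, (g : E) p = lam • p := by
    intro p
    apply mul_left_cancel₀ hXRg_ne
    have := data_homog_apply hdg hTgp_lt hhom hqT p
    rw [this, ← hh, h0, Nat.add_zero, mul_smul_comm]
  have hg1 : g = lam • (1 : WeylAlgebra) := by
    apply Subtype.ext
    show (g : E) = lam • (1 : E)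
    apply LinearMap.ext
    intro p
    rw [hgp p]
    rfl
  -- then the ideal is everything : contradiction with properness
  have h1mem : (1 : WeylAlgebra) ∈ Submodule.span (WeylAlgebra)ᵐᵒᵖ ({g} : Set WeylAlgebra) := by
    apply Submodule.mem_span_singleton.2
    refine ⟨MulOpposite.op (lam⁻¹ • (1 : WeylAlgebra)), ?_⟩
    rw [MulOpposite.smul_eq_mul_unop, MulOpposite.unop_op]
    rw [mul_smul_comm, mul_one, hg1, smul_smul, inv_mul_cancel₀ hlam_ne, one_smul]
  apply span_ne_top
  rw [hg]
  apply top_unique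
  intro x _
  have := Submodule.smul_mem (Submodule.span (WeylAlgebra)ᵐᵒᵖ ({g} : Set WeylAlgebra))
    (MulOpposite.op x) h1mem
  rw [MulOpposite.smul_eq_mul_unop, MulOpposite.unop_op, one_mul] at this
  exact this

/-- In the Weyl algebra (where `∂z - z∂ = 1`), the right ideal generated
by `z²` and `1 - z∂` is a proper nonzero right ideal which is not principal.  (Right
ideals are submodules of the Weyl algebra viewed as a right module over itself, i.e.
as a module over the opposite ring.) -/
theorem weyl_right_ideal_not_principal :
    Wd * Wz - Wz * Wd = 1 ∧
    Submodule.span (WeylAlgebra)ᵐᵒᵖ ({Wz ^ 2, 1 - Wz * Wd} : Set WeylAlgebra) ≠ ⊥ ∧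
    Submodule.span (WeylAlgebra)ᵐᵒᵖ ({Wz ^ 2, 1 - Wz * Wd} : Set WeylAlgebra) ≠ ⊤ ∧
    ¬∃ g : WeylAlgebra,
        Submodule.span (WeylAlgebra)ᵐᵒᵖ ({Wz ^ 2, 1 - Wz * Wd} : Set WeylAlgebra) =
          Submodule.span (WeylAlgebra)ᵐᵒᵖ ({g} : Set WeylAlgebra) := by
  exact ⟨weyl_commutator, span_ne_bot, span_ne_top, not_principal⟩
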